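/- Let n = (n₁,n₂) ∈ ℝ² be a unit vector and v = (v₁,v₂) ∈ ℝ² with v·n ≠ 0. Then the map v ↦ A_{v,n} (with n fixed) is differentiable, and the 2×2 Jacobian matrices in v of the columns of −2A_{v,n} are: ∇_v(−2A¹_{v,n}) = [[−2v₂²n₁/(v·n)², −2n₂ − 2v₁²n₁²n₂/(v·n)² + 4v₁v₂n₁³/(v·n)² + 2v₂²n₁²n₂/(v·n)²],[−2v₂²n₂/(v·n)², 2n₁ − 2v₁²n₁n₂²/(v·n)² + 4v₁v₂n₁²n₂/(v·n)² + 2v₂²n₁n₂²/(v·n)²]] and ∇_v(−2A²_{v,n}) = [[2n₂ + 2v₁²n₁²n₂/(v·n)² + 4v₁v₂n₁n₂²/(v·n)² − 2v₂²n₁²n₂/(v·n)², −2v₁²n₁/(v·n)²],[−2n₁ − 2v₂²n₁n₂²/(v·n)² + 4v₁v₂n₂³/(v·n)² + 2v₁²n₁n₂²/(v·n)², −2v₁²n₂/(v·n)²]]. -/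

import Mathlib

noncomputable section

open Matrix Real Set

/-- The Euclidean plane ℝ². -/
abbrev E : Type := EuclideanSpace ℝ (Fin 2)

/-- Dot product on ℝ². -/
def dot (a b : E) : ℝ := a 0 * b 0 + a 1 * b 1

/-- Build a vector of ℝ² from its components. -/
def toE (f : Fin 2 → ℝ) : E := (WithLp.equiv 2 (Fin 2 → ℝ)).symm f

/-- Tensor (outer) product a⊗b, (a⊗b)_{ij} = aᵢ bⱼ. -/
def outer (a b : E) : Matrix (Fin 2) (Fin 2) ℝ := Matrix.of fun i j => a i * b j

/-- Matrix acting on a column vector. -/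
def mulV (M : Matrix (Fin 2) (Fin 2) ℝ) (v : E) : E := toE fun i => M i 0 * v 0 + M i 1 * v 1

/-- Row vector multiplied by a matrix on the right. -/
def vMulM (w : E) (M : Matrix (Fin 2) (Fin 2) ℝ) : E := toE fun j => w 0 * M 0 j + w 1 * M 1 j

/-- Specular reflection matrix R_n = I - 2 n⊗n. -/
def Rmat (n : E) : Matrix (Fin 2) (Fin 2) ℝ := 1 - (2 : ℝ) • outer n n

/-- The matrix A_{v,n} = ((v·n) I + n⊗v)(I - (v⊗n)/(v·n)). -/
def Amat (v n : E) : Matrix (Fin 2) (Fin 2) ℝ :=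
  (dot v n • (1 : Matrix (Fin 2) (Fin 2) ℝ) + outer n v) *
    (1 - (dot v n)⁻¹ • outer v n)

/-- Counterclockwise rotation by π/2. -/
def Qmat : Matrix (Fin 2) (Fin 2) ℝ := !![0, -1; 1, 0]

/-- Backward exit time from the closed unit disk. -/
def tb (x v : E) : ℝ := sSup {s : ℝ | 0 ≤ s ∧ ‖x - s • v‖ ≤ 1}

/-- Backward exit point from the closed unit disk. -/
def xb (x v : E) : E := x - tb x v • v

/-- The i-th column of a 2×2 matrix, as a vector of ℝ². -/
def colE (M : Matrix (Fin 2) (Fin 2) ℝ) (i : Fin 2) : E := toE fun k => M k i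

/-- A 2×2 matrix as a continuous linear map ℝ² → ℝ². -/
def toCLM (M : Matrix (Fin 2) (Fin 2) ℝ) : E →L[ℝ] E :=
  LinearMap.toContinuousLinearMap (Matrix.toEuclideanLin M)


lemma aux_entry (n v : E) (hv : v 0 * n 0 + v 1 * n 1 ≠ 0) (α β γ a b : ℝ)
    (ha : a = α + γ * (2 * v 0 * (v 0 * n 0 + v 1 * n 1) - (v 0 ^ 2 + v 1 ^ 2) * n 0) /
      (v 0 * n 0 + v 1 * n 1) ^ 2)
    (hb : b = β + γ * (2 * v 1 * (v 0 * n 0 + v 1 * n 1) - (v 0 ^ 2 + v 1 ^ 2) * n 1) /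
      (v 0 * n 0 + v 1 * n 1) ^ 2) :
    HasFDerivAt
      (fun w : E => α * w 0 + β * w 1 + γ * ((w 0 * w 0 + w 1 * w 1) * (w 0 * n 0 + w 1 * n 1)⁻¹))
      (a • (EuclideanSpace.proj (0 : Fin 2) : E →L[ℝ] ℝ)
        + b • (EuclideanSpace.proj (1 : Fin 2) : E →L[ℝ] ℝ)) v := by
  have h0 : HasFDerivAt (fun w : E => w 0) (EuclideanSpace.proj (0 : Fin 2) : E →L[ℝ] ℝ) v :=
    (EuclideanSpace.proj (0 : Fin 2) : E →L[ℝ] ℝ).hasFDerivAt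
  have h1 : HasFDerivAt (fun w : E => w 1) (EuclideanSpace.proj (1 : Fin 2) : E →L[ℝ] ℝ) v :=
    (EuclideanSpace.proj (1 : Fin 2) : E →L[ℝ] ℝ).hasFDerivAt
  have hd := (h0.mul_const (n 0)).add (h1.mul_const (n 1))
  have hinv := (hasDerivAt_inv hv).comp_hasFDerivAt v hd
  have H := ((h0.const_mul α).add (h1.const_mul β)).add
    ((((h0.mul h0).add (h1.mul h1)).mul hinv).const_mul γ)
  refine H.congr_fderiv ?_
  ext u
  simp [ha, hb]
  field_simp
  ring

lemma proj_comp (M : Matrix (Fin 2) (Fin 2) ℝ) (k : Fin 2) :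
    (ContinuousLinearMap.proj k).comp
      ((PiLp.continuousLinearEquiv 2 ℝ (fun _ : Fin 2 => ℝ) : E →L[ℝ] (Fin 2 → ℝ)).comp (toCLM M))
      = M k 0 • (EuclideanSpace.proj (0 : Fin 2) : E →L[ℝ] ℝ)
        + M k 1 • (EuclideanSpace.proj (1 : Fin 2) : E →L[ℝ] ℝ) := by
  ext u
  simp [toCLM, Matrix.toEuclideanLin_apply, Matrix.mulVec, dotProduct, Fin.sum_univ_two, mul_comm]
  fin_cases k <;> rfl

set_option maxHeartbeats 1600000 in
/-- Jacobians in v of the columns of v ↦ −2A_{v,n}. -/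
theorem stmt8 (n v : E) (hn : ‖n‖ = 1) (hv : dot v n ≠ 0) :
    let d := dot v n
    HasFDerivAt (fun w => colE ((-2 : ℝ) • Amat w n) 0)
      (toCLM
        !![-2 * v 1 ^ 2 * n 0 / d ^ 2,
           -2 * n 1 - 2 * v 0 ^ 2 * n 0 ^ 2 * n 1 / d ^ 2 + 4 * v 0 * v 1 * n 0 ^ 3 / d ^ 2
             + 2 * v 1 ^ 2 * n 0 ^ 2 * n 1 / d ^ 2;
           -2 * v 1 ^ 2 * n 1 / d ^ 2,
           2 * n 0 - 2 * v 0 ^ 2 * n 0 * n 1 ^ 2 / d ^ 2 + 4 * v 0 * v 1 * n 0 ^ 2 * n 1 / d ^ 2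
             + 2 * v 1 ^ 2 * n 0 * n 1 ^ 2 / d ^ 2]) v ∧
    HasFDerivAt (fun w => colE ((-2 : ℝ) • Amat w n) 1)
      (toCLM
        !![2 * n 1 + 2 * v 0 ^ 2 * n 0 ^ 2 * n 1 / d ^ 2 + 4 * v 0 * v 1 * n 0 * n 1 ^ 2 / d ^ 2
             - 2 * v 1 ^ 2 * n 0 ^ 2 * n 1 / d ^ 2,
           -2 * v 0 ^ 2 * n 0 / d ^ 2;
           -2 * n 0 - 2 * v 1 ^ 2 * n 0 * n 1 ^ 2 / d ^ 2 + 4 * v 0 * v 1 * n 1 ^ 3 / d ^ 2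
             + 2 * v 0 ^ 2 * n 0 * n 1 ^ 2 / d ^ 2,
           -2 * v 0 ^ 2 * n 1 / d ^ 2]) v := by
  intro d
  have hv' : v 0 * n 0 + v 1 * n 1 ≠ 0 := hv
  have hdv : d = v 0 * n 0 + v 1 * n 1 := rfl
  have hn2 : n 0 ^ 2 + n 1 ^ 2 = 1 := by
    have h := hn
    rw [EuclideanSpace.norm_eq] at h
    simp [Real.sqrt_eq_one, Fin.sum_univ_two, sq_abs] at h
    simpa [sq_abs] using h
  have hc : Continuous (fun w : E => w 0 * n 0 + w 1 * n 1) := by fun_prop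
  have hev : ∀ᶠ w in nhds v, w 0 * n 0 + w 1 * n 1 ≠ 0 :=
    hc.continuousAt.eventually_ne hv'
  constructor
  · rw [← (PiLp.continuousLinearEquiv 2 ℝ (fun _ : Fin 2 => ℝ)).comp_hasFDerivAt_iff,
      hasFDerivAt_pi']
    intro k
    rw [proj_comp]
    fin_cases k
    · refine (aux_entry n v hv' (-2 * n 0) (-2 * n 1) (2 * n 0 ^ 2) _ _ ?_ ?_).congr_of_eventuallyEq ?_
      · simp only [Matrix.cons_val', Matrix.cons_val_zero, Matrix.cons_val_one, Matrix.head_cons,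
          Matrix.empty_val', Matrix.cons_val_fin_one, Matrix.head_fin_const, Matrix.of_apply,
          Fin.zero_eta, Fin.mk_one]
        rw [hdv]; field_simp [show n 0 * v 0 + v 1 * n 1 ≠ 0 by rwa [mul_comm (n 0)]]; linear_combination (v 1 ^ 2 * n 0) * hn2
      · simp only [Matrix.cons_val', Matrix.cons_val_zero, Matrix.cons_val_one, Matrix.head_cons,
          Matrix.empty_val', Matrix.cons_val_fin_one, Matrix.head_fin_const, Matrix.of_apply,
          Fin.zero_eta, Fin.mk_one]
        rw [hdv]; field_simp; ring
      · filter_upwards [hev] with w hw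
        simp [colE, toE, Amat, dot, outer, Matrix.mul_apply, Fin.sum_univ_two, Matrix.one_apply]
        field_simp
        ring
    · refine (aux_entry n v hv' (-2 * n 1) (2 * n 0) (2 * n 0 * n 1) _ _ ?_ ?_).congr_of_eventuallyEq ?_
      · simp only [Matrix.cons_val', Matrix.cons_val_zero, Matrix.cons_val_one, Matrix.head_cons,
          Matrix.empty_val', Matrix.cons_val_fin_one, Matrix.head_fin_const, Matrix.of_apply,
          Fin.zero_eta, Fin.mk_one]
        rw [hdv]; field_simp; linear_combination (v 1 ^ 2 * n 1) * hn2
      · simp only [Matrix.cons_val', Matrix.cons_val_zero, Matrix.cons_val_one, Matrix.head_cons,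
          Matrix.empty_val', Matrix.cons_val_fin_one, Matrix.head_fin_const, Matrix.of_apply,
          Fin.zero_eta, Fin.mk_one]
        rw [hdv]; field_simp; ring
      · filter_upwards [hev] with w hw
        simp [colE, toE, Amat, dot, outer, Matrix.mul_apply, Fin.sum_univ_two, Matrix.one_apply]
        field_simp [show w 0 * n 0 + n 1 * w 1 ≠ 0 by rwa [mul_comm (n 1)]]
        ring
  · rw [← (PiLp.continuousLinearEquiv 2 ℝ (fun _ : Fin 2 => ℝ)).comp_hasFDerivAt_iff,
      hasFDerivAt_pi']
    intro k
    rw [proj_comp]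
    fin_cases k
    · refine (aux_entry n v hv' (2 * n 1) (-2 * n 0) (2 * n 0 * n 1) _ _ ?_ ?_).congr_of_eventuallyEq ?_
      · simp only [Matrix.cons_val', Matrix.cons_val_zero, Matrix.cons_val_one, Matrix.head_cons,
          Matrix.empty_val', Matrix.cons_val_fin_one, Matrix.head_fin_const, Matrix.of_apply,
          Fin.zero_eta, Fin.mk_one]
        rw [hdv]; field_simp; ring
      · simp only [Matrix.cons_val', Matrix.cons_val_zero, Matrix.cons_val_one, Matrix.head_cons,
          Matrix.empty_val', Matrix.cons_val_fin_one, Matrix.head_fin_const, Matrix.of_apply,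
          Fin.zero_eta, Fin.mk_one]
        rw [hdv]; field_simp; linear_combination (v 0 ^ 2 * n 0) * hn2
      · filter_upwards [hev] with w hw
        simp [colE, toE, Amat, dot, outer, Matrix.mul_apply, Fin.sum_univ_two, Matrix.one_apply]
        field_simp
        ring
    · refine (aux_entry n v hv' (-2 * n 0) (-2 * n 1) (2 * n 1 ^ 2) _ _ ?_ ?_).congr_of_eventuallyEq ?_
      · simp only [Matrix.cons_val', Matrix.cons_val_zero, Matrix.cons_val_one, Matrix.head_cons,
          Matrix.empty_val', Matrix.cons_val_fin_one, Matrix.head_fin_const, Matrix.of_apply,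
          Fin.zero_eta, Fin.mk_one]
        rw [hdv]; field_simp; ring
      · simp only [Matrix.cons_val', Matrix.cons_val_zero, Matrix.cons_val_one, Matrix.head_cons,
          Matrix.empty_val', Matrix.cons_val_fin_one, Matrix.head_fin_const, Matrix.of_apply,
          Fin.zero_eta, Fin.mk_one]
        rw [hdv]; field_simp [show v 0 * n 0 + n 1 * v 1 ≠ 0 by rwa [mul_comm (n 1)]]; linear_combination (v 0 ^ 2 * n 1) * hn2
      · filter_upwards [hev] with w hw
        simp [colE, toE, Amat, dot, outer, Matrix.mul_apply, Fin.sum_univ_two, Matrix.one_apply]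
        field_simp [show w 0 * n 0 + n 1 * w 1 ≠ 0 by rwa [mul_comm (n 1)]]
        ring
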